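/- Let M be a finite set, v : 2^M → ℝ≥0 a valuation with v(∅) = 0 that is monotone (v(S) ≤ v(T) whenever S ⊆ T), b ∈ (0,1], n ≥ 1 an integer, and let β satisfy 0 < β ≤ APS(v, b). Define v̂ : 2^M → ℝ≥0 by v̂(S) := min( n·b, (n·b/β)·v(S) ). Then there exist finitely many sets S_1, …, S_h ⊆ M and weights α_1, …, α_h > 0 such that ∑_{r=1}^h α_r = 1, for every j ∈ M one has ∑_{r : j ∈ S_r} α_r ≤ b, and v̂(S_r) = n·b for every r ∈ {1,…,h}. -/

import Mathlib

open Finset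

/-- The AnyPrice Share of a valuation `v` on the goods `G` with entitlement `b`:
the infimum over price vectors `p ≥ 0` summing to `1` of the maximum value of a
bundle of total price at most `b`. -/
noncomputable def APS {G : Type*} [Fintype G] [DecidableEq G]
    (v : Finset G → ℝ) (b : ℝ) : ℝ :=
  sInf { x : ℝ | ∃ p : G → ℝ, (∀ j, 0 ≤ p j) ∧ (∑ j, p j) = 1 ∧
    x = sSup { y : ℝ | ∃ S : Finset G, (∑ j ∈ S, p j) ≤ b ∧ y = v S } }

lemma farkas_cover {G : Type*} [Fintype G] [DecidableEq G]
    (b : ℝ) (hb0 : 0 < b)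
    (F : Finset (Finset G)) (hFne : F.Nonempty)
    (hF : ∀ p : G → ℝ, (∀ j, 0 ≤ p j) → (∑ j, p j) = 1 →
      ∃ S ∈ F, (∑ j ∈ S, p j) ≤ b) :
    ∃ α : Finset G → ℝ, (∀ S, 0 ≤ α S) ∧ (∑ S ∈ F, α S) = 1 ∧
      ∀ j, (∑ S ∈ F.filter (fun S => j ∈ S), α S) ≤ b := by
  classical
  haveI hιne : Nonempty {S : Finset G // S ∈ F} := ⟨⟨hFne.choose, hFne.choose_spec⟩⟩
  set Φ : ({S : Finset G // S ∈ F} → ℝ) → (G → ℝ) :=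
    fun a j => ∑ i, a i * (if j ∈ i.1 then (1:ℝ) else 0) with hΦ
  have hΦlin : IsLinearMap ℝ Φ := by
    constructor
    · intro a a'; funext j
      simp only [Φ, Pi.add_apply, add_mul]
      rw [Finset.sum_add_distrib]
    · intro c a; funext j
      simp only [Φ, Pi.smul_apply, smul_eq_mul, Finset.mul_sum, mul_assoc]
  have hΦcont : Continuous Φ := by
    apply continuous_pi
    intro j
    exact continuous_finset_sum _ fun i _ => (continuous_apply i).mul continuous_const
  set K : Set (G → ℝ) := Φ '' (stdSimplex ℝ {S : Finset G // S ∈ F}) with hK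
  set C : Set (G → ℝ) := {x | ∀ j, x j ≤ b} with hC
  have hCeq : C = ⋂ j, {x : G → ℝ | x j ≤ b} := by
    ext x; simp [C, Set.mem_iInter]
  have hKcomp : IsCompact K := (isCompact_stdSimplex ℝ _).image hΦcont
  have hKconv : Convex ℝ K := (convex_stdSimplex ℝ _).is_linear_image hΦlin
  have hCcl : IsClosed C := by
    rw [hCeq]
    exact isClosed_iInter fun j => isClosed_le (continuous_apply j) continuous_const
  have hCconv : Convex ℝ C := by
    rw [hCeq]
    exact convex_iInter fun j => convex_halfSpace_le ⟨fun _ _ => rfl, fun _ _ => rfl⟩ b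
  have hnd : ¬ Disjoint K C := by
    intro hd
    obtain ⟨f, u, s', hKu, hus, hCs⟩ :=
      geometric_hahn_banach_compact_closed hKconv hKcomp hCconv hCcl hd
    set w : G → ℝ := fun j => -(f (Pi.single j 1 : G → ℝ)) with hw
    have hfx : ∀ x : G → ℝ, f x = -∑ j, x j * w j := by
      intro x
      have hx : x = ∑ j, x j • (Pi.single j 1 : G → ℝ) := by
        funext k
        simp [Finset.sum_apply, Pi.single_apply, mul_ite, Finset.sum_ite_eq]
      calc f x = f (∑ j, x j • (Pi.single j 1 : G → ℝ)) := by rw [← hx]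
        _ = ∑ j, x j * f (Pi.single j 1 : G → ℝ) := by
            rw [map_sum]; simp [smul_eq_mul]
        _ = -∑ j, x j * w j := by simp [hw, mul_neg]
    have hCb : (fun _ : G => b) ∈ C := fun k => le_refl b
    have hfb : f (fun _ : G => b) = -(b * ∑ j, w j) := by
      rw [hfx, ← Finset.mul_sum]
    have hsb : s' < f (fun _ : G => b) := hCs _ hCb
    have hw0 : ∀ j, 0 ≤ w j := by
      intro j
      by_contra hneg
      push_neg at hneg
      have hfe : 0 < f (Pi.single j 1 : G → ℝ) := by
        rw [hw] at hneg; simp only [Left.neg_neg_iff] at hneg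
        simpa using hneg
      set t : ℝ := (f (fun _ : G => b) - s') / f (Pi.single j 1 : G → ℝ) + 1 with ht
      have htpos : 0 < t := by
        have h1 : 0 < f (fun _ : G => b) - s' := by linarith
        have h2 : 0 < (f (fun _ : G => b) - s') / f (Pi.single j 1 : G → ℝ) := div_pos h1 hfe
        rw [ht]; linarith
      have hmemC : ((fun _ : G => b) - t • (Pi.single j 1 : G → ℝ)) ∈ C := by
        intro k
        simp only [Pi.sub_apply, Pi.smul_apply, Pi.single_apply, smul_eq_mul]
        by_cases hk : k = j <;> simp [hk] <;> nlinarith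
      have hval : f ((fun _ : G => b) - t • (Pi.single j 1 : G → ℝ))
          = f (fun _ : G => b) - t * f (Pi.single j 1 : G → ℝ) := by
        rw [map_sub, map_smul]; simp [smul_eq_mul]
      have htf : t * f (Pi.single j 1 : G → ℝ) = (f (fun _ : G => b) - s') + f (Pi.single j 1 : G → ℝ) := by
        rw [ht, add_mul, one_mul, div_mul_cancel₀ _ hfe.ne']
      have := hCs _ hmemC
      rw [hval, htf] at this
      linarith
    have hkey : ∀ S ∈ F, b * (∑ j, w j) < ∑ j ∈ S, w j := by
      intro S hS
      set δ : {S : Finset G // S ∈ F} → ℝ := Pi.single ⟨S, hS⟩ 1 with hδ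
      have hδap : ∀ i, δ i = if i = ⟨S, hS⟩ then (1:ℝ) else 0 := by
        intro i; rw [hδ, Pi.single_apply]
      have hvert : δ ∈ stdSimplex ℝ {S : Finset G // S ∈ F} := by
        constructor
        · intro i
          rw [hδap]
          by_cases hi : i = ⟨S, hS⟩ <;> simp [hi]
        · rw [Finset.sum_congr rfl fun i _ => hδap i]
          simp [Finset.sum_ite_eq]
      have hΦδ : Φ δ = fun j => if j ∈ S then (1:ℝ) else 0 := by
        funext j
        show (∑ i : {S : Finset G // S ∈ F}, δ i * (if j ∈ i.1 then (1:ℝ) else 0)) = _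
        rw [Finset.sum_eq_single (⟨S, hS⟩ : {S : Finset G // S ∈ F})]
        · rw [hδap]; simp
        · intro i _ hi; rw [hδap]; simp [hi]
        · intro h; exact absurd (Finset.mem_univ _) h
      have hmemK : (fun j => if j ∈ S then (1:ℝ) else 0) ∈ K := ⟨_, hvert, hΦδ⟩
      have h1 : f (fun j => if j ∈ S then (1:ℝ) else 0) < u := hKu _ hmemK
      have h2 : f (fun j => if j ∈ S then (1:ℝ) else 0) = -∑ j ∈ S, w j := by
        rw [hfx]
        congr 1
        simp only [ite_mul, one_mul, zero_mul]
        rw [Finset.sum_ite_mem, Finset.univ_inter]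
      rw [h2] at h1
      rw [hfb] at hsb
      linarith
    obtain ⟨S0, hS0⟩ := hFne
    have hWpos : 0 < ∑ j, w j := by
      rcases (Finset.sum_nonneg fun j _ => hw0 j).lt_or_eq with h | h
      · exact h
      · exfalso
        have hall : ∀ j ∈ (Finset.univ : Finset G), w j = 0 :=
          (Finset.sum_eq_zero_iff_of_nonneg (fun j _ => hw0 j)).1 h.symm
        have hk := hkey S0 hS0
        have hz : ∑ j ∈ S0, w j = 0 :=
          Finset.sum_eq_zero fun j _ => hall j (Finset.mem_univ j)
        rw [← h, hz] at hk
        simp at hk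
    set p : G → ℝ := fun j => w j / ∑ k, w k with hp
    obtain ⟨S, hSF, hSp⟩ := hF p (fun j => div_nonneg (hw0 j) hWpos.le)
      (by rw [hp]; dsimp only; rw [← Finset.sum_div]; exact div_self hWpos.ne')
    have hps : (∑ j ∈ S, p j) = (∑ j ∈ S, w j) / ∑ k, w k := by
      rw [hp]; dsimp only; rw [Finset.sum_div]
    rw [hps, div_le_iff₀ hWpos] at hSp
    have := hkey S hSF
    nlinarith
  obtain ⟨x, hxK, hxC⟩ := Set.not_disjoint_iff.1 hnd
  obtain ⟨a, ha, hΦa⟩ := hxK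
  refine ⟨fun S => if h : S ∈ F then a ⟨S, h⟩ else 0, ?_, ?_, ?_⟩
  · intro S
    by_cases h : S ∈ F
    · simpa [h] using ha.1 ⟨S, h⟩
    · simp [h]
  · rw [← Finset.sum_attach F (fun S => if h : S ∈ F then a ⟨S, h⟩ else 0)]
    have hcongr : ∀ i ∈ F.attach, (if h : i.1 ∈ F then a ⟨i.1, h⟩ else 0) = a i := by
      intro i _
      rw [dif_pos i.2]
    rw [Finset.sum_congr rfl hcongr, ← Finset.univ_eq_attach]
    exact ha.2
  · intro j
    have hxj : x j ≤ b := hxC j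
    have hxj' : (∑ i, a i * (if j ∈ i.1 then (1:ℝ) else 0)) = x j := congrFun hΦa j
    calc ∑ S ∈ F.filter (fun S => j ∈ S), (if h : S ∈ F then a ⟨S, h⟩ else 0)
        = ∑ S ∈ F, (if j ∈ S then (if h : S ∈ F then a ⟨S, h⟩ else 0) else 0) := by
          rw [Finset.sum_filter]
      _ = ∑ i ∈ F.attach, (if j ∈ i.1 then a i else 0) := by
          rw [← Finset.sum_attach F (fun S => if j ∈ S then (if h : S ∈ F then a ⟨S, h⟩ else 0) else 0)]
          refine Finset.sum_congr rfl fun i _ => ?_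
          rw [dif_pos i.2]
      _ = ∑ i, a i * (if j ∈ i.1 then (1:ℝ) else 0) := by
          rw [← Finset.univ_eq_attach]
          refine Finset.sum_congr rfl fun i _ => ?_
          by_cases h : j ∈ i.1 <;> simp [h]
      _ = x j := hxj'
      _ ≤ b := hxj

/-- For `0 < β ≤ APS(v,b)`, after scaling `v` by `n·b/β` and truncating at `n·b`,
there is a fractional allocation (weights `α_r` on sets `S_r`) that is feasible for
entitlement `b` and is supported on sets of truncated value exactly `n·b`. -/
theorem exists_fractional_cover_of_le_APS {G : Type*} [Fintype G] [DecidableEq G]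
    (v : Finset G → ℝ) (hnn : ∀ S, 0 ≤ v S) (hempty : v ∅ = 0)
    (hmono : ∀ S T : Finset G, S ⊆ T → v S ≤ v T)
    (b : ℝ) (hb0 : 0 < b) (hb1 : b ≤ 1)
    (n : ℕ) (hn : 1 ≤ n)
    (β : ℝ) (hβ0 : 0 < β) (hβ : β ≤ APS v b) :
    ∃ (h : ℕ) (S : Fin h → Finset G) (α : Fin h → ℝ),
      (∀ r, 0 < α r) ∧
      (∑ r, α r) = 1 ∧
      (∀ j : G, ∑ r ∈ Finset.univ.filter (fun r : Fin h => j ∈ S r), α r ≤ b) ∧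
      (∀ r, min ((n : ℝ) * b) (((n : ℝ) * b / β) * v (S r)) = (n : ℝ) * b) := by
  classical
  -- the APS defining set
  set T : Set ℝ := { x : ℝ | ∃ p : G → ℝ, (∀ j, 0 ≤ p j) ∧ (∑ j, p j) = 1 ∧
    x = sSup { y : ℝ | ∃ S : Finset G, (∑ j ∈ S, p j) ≤ b ∧ y = v S } } with hT
  have hAPS : APS v b = sInf T := rfl
  -- G must be nonempty
  cases isEmpty_or_nonempty G with
  | inl hGe =>
      exfalso
      have hTe : T = ∅ := by
        ext x
        simp only [hT, Set.mem_setOf_eq, Set.mem_empty_iff_false, iff_false]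
        rintro ⟨p, -, hsum, -⟩
        rw [Finset.univ_eq_empty, Finset.sum_empty] at hsum
        exact one_ne_zero hsum.symm
      rw [hAPS, hTe, Real.sInf_empty] at hβ
      linarith
  | inr hGne =>
  -- facts about the sup-sets
  have hYfin : ∀ p : G → ℝ,
      ({ y : ℝ | ∃ S : Finset G, (∑ j ∈ S, p j) ≤ b ∧ y = v S }).Finite := by
    intro p
    apply (Set.finite_range v).subset
    rintro y ⟨S, -, rfl⟩
    exact ⟨S, rfl⟩
  have hYne : ∀ p : G → ℝ, (∀ j, 0 ≤ p j) →
      ({ y : ℝ | ∃ S : Finset G, (∑ j ∈ S, p j) ≤ b ∧ y = v S }).Nonempty := by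
    intro p hp
    exact ⟨v ∅, ∅, by simp [hb0.le], rfl⟩
  have hTlb : ∀ x ∈ T, (0:ℝ) ≤ x := by
    rintro x ⟨p, hp0, hp1, rfl⟩
    have h0mem : v ∅ ∈ { y : ℝ | ∃ S : Finset G, (∑ j ∈ S, p j) ≤ b ∧ y = v S } :=
      ⟨∅, by simp [hb0.le], rfl⟩
    have := le_csSup ((hYfin p).bddAbove) h0mem
    rw [hempty] at this
    exact this
  have hTbdd : BddBelow T := ⟨0, hTlb⟩
  -- for every admissible price vector, there is a cheap set of value ≥ β
  have hmem : ∀ p : G → ℝ, (∀ j, 0 ≤ p j) → (∑ j, p j) = 1 →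
      ∃ S : Finset G, (∑ j ∈ S, p j) ≤ b ∧ β ≤ v S := by
    intro p hp0 hp1
    set Y := { y : ℝ | ∃ S : Finset G, (∑ j ∈ S, p j) ≤ b ∧ y = v S } with hY
    have hxT : sSup Y ∈ T := ⟨p, hp0, hp1, rfl⟩
    have h1 : APS v b ≤ sSup Y := by
      rw [hAPS]; exact csInf_le hTbdd hxT
    have h2 : sSup Y ∈ Y := (hYne p hp0).csSup_mem (hYfin p)
    obtain ⟨S, hSp, hSv⟩ := h2
    exact ⟨S, hSp, by rw [← hSv]; linarith⟩
  -- β ≤ v univ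
  have hvuniv : β ≤ v Finset.univ := by
    set p : G → ℝ := fun _ => (Fintype.card G : ℝ)⁻¹ with hp
    have hcard : (0:ℝ) < (Fintype.card G : ℝ) := by
      have := Fintype.card_pos_iff.2 hGne
      exact_mod_cast this
    obtain ⟨S, -, hSv⟩ := hmem p (fun j => by positivity)
      (by rw [hp]; simp only [Finset.sum_const, Finset.card_univ, nsmul_eq_mul]
          exact mul_inv_cancel₀ hcard.ne')
    exact hSv.trans (hmono S Finset.univ (Finset.subset_univ S))
  -- apply the farkas lemma
  set F : Finset (Finset G) := Finset.univ.filter (fun S => β ≤ v S) with hFdef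
  have hFne : F.Nonempty := ⟨Finset.univ, by simp [hFdef, hvuniv]⟩
  obtain ⟨α, hα0, hα1, hαb⟩ := farkas_cover b hb0 F hFne (by
    intro p hp0 hp1
    obtain ⟨S, hSp, hSv⟩ := hmem p hp0 hp1
    exact ⟨S, by simp [hFdef, hSv], hSp⟩)
  -- extract the support
  set Tsupp : Finset (Finset G) := F.filter (fun S => 0 < α S) with hTs
  set e : Fin Tsupp.card ≃ {x // x ∈ Tsupp} := Tsupp.equivFin.symm with he
  refine ⟨Tsupp.card, fun r => (e r).1, fun r => α (e r).1, ?_, ?_, ?_, ?_⟩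
  · intro r
    exact (Finset.mem_filter.1 (e r).2).2
  · have h1 : ∑ r, α (e r).1 = ∑ t : {x // x ∈ Tsupp}, α t.1 :=
      Equiv.sum_comp e (fun t => α t.1)
    rw [h1, Finset.sum_coe_sort Tsupp (fun S => α S)]
    rw [Finset.sum_subset (Finset.filter_subset _ F)]
    · exact hα1
    · intro S hSF hSn
      have hSn' : ¬ (S ∈ F ∧ 0 < α S) := fun hc => hSn (Finset.mem_filter.2 hc)
      push_neg at hSn'
      exact le_antisymm (hSn' hSF) (hα0 S)
  · intro j
    have h1 : ∑ r ∈ Finset.univ.filter (fun r => j ∈ (e r).1.1), α (e r).1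
        = ∑ r, (if j ∈ (e r).1.1 then α (e r).1 else 0) := by
      rw [Finset.sum_filter]
    have h2 : ∑ r, (if j ∈ (e r).1.1 then α (e r).1 else 0)
        = ∑ t : {x // x ∈ Tsupp}, (if j ∈ t.1 then α t.1 else 0) :=
      Equiv.sum_comp e (fun t => if j ∈ t.1 then α t.1 else 0)
    have h3 : ∑ t : {x // x ∈ Tsupp}, (if j ∈ t.1 then α t.1 else 0)
        = ∑ S ∈ Tsupp, (if j ∈ S then α S else 0) :=
      Finset.sum_coe_sort Tsupp (fun S => if j ∈ S then α S else 0)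
    have h4 : ∑ S ∈ Tsupp, (if j ∈ S then α S else 0)
        = ∑ S ∈ Tsupp.filter (fun S => j ∈ S), α S := (Finset.sum_filter _ _).symm
    have h5 : ∑ S ∈ Tsupp.filter (fun S => j ∈ S), α S
        ≤ ∑ S ∈ F.filter (fun S => j ∈ S), α S := by
      apply Finset.sum_le_sum_of_subset_of_nonneg
      · exact Finset.filter_subset_filter _ (Finset.filter_subset _ F)
      · intro S _ _; exact hα0 S
    calc ∑ r ∈ Finset.univ.filter (fun r => j ∈ (e r).1.1), α (e r).1
        = ∑ S ∈ Tsupp.filter (fun S => j ∈ S), α S := by rw [h1, h2, h3, h4]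
      _ ≤ ∑ S ∈ F.filter (fun S => j ∈ S), α S := h5
      _ ≤ b := hαb j
  · intro r
    have hrF : (e r).1 ∈ F := Finset.filter_subset _ F ((e r).2)
    have hrv : β ≤ v (e r).1 := by
      rw [hFdef, Finset.mem_filter] at hrF
      exact hrF.2
    have hnb : (0:ℝ) ≤ (n : ℝ) * b := by positivity
    apply min_eq_left
    calc (n : ℝ) * b = (n : ℝ) * b / β * β := by
          rw [div_mul_cancel₀ _ hβ0.ne']
      _ ≤ (n : ℝ) * b / β * v (e r).1 := by
          apply mul_le_mul_of_nonneg_left hrv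
          positivity
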